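/- Let c : T → ℝ^S be an incentive compatible menu for the beliefs Π, and let t, t' ∈ T. If Π(t) ∩ Π(t') has full dimension, then c(t) = c(t'). -/
import Mathlib


noncomputable section

/-- Euclidean inner product on ℝ^S. -/
def dotp {S : Type*} [Fintype S] (x y : S → ℝ) : ℝ := ∑ s, x s * y s

/-- A set `A ⊆ ℝ^S` has full dimension if the only vector orthogonal to all of `A` is `0`. -/
def FullDim {S : Type*} [Fintype S] (A : Set (S → ℝ)) : Prop :=
  ∀ x : S → ℝ, (∀ a ∈ A, dotp a x = 0) → x = 0

theorem stmt_6 {S T : Type*} [Fintype S] [Fintype T] [Nonempty S] [Nonempty T]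
    (P : T → Set (S → ℝ))
    (hne : ∀ t, (P t).Nonempty) (hcl : ∀ t, IsClosed (P t))
    (hcv : ∀ t, Convex ℝ (P t)) (hsub : ∀ t, P t ⊆ stdSimplex ℝ S)
    (c : T → (S → ℝ))
    (hic : ∀ t s : T, ∀ π ∈ P t, dotp π (c t) ≤ dotp π (c s))
    (t t' : T) (hfd : FullDim (P t ∩ P t')) :
    c t = c t' := by
  have h := hfd (c t - c t') (fun a ha => by
    have h1 := hic t t' a ha.1
    have h2 := hic t' t a ha.2
    have : dotp a (c t) = dotp a (c t') := le_antisymm h1 h2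
    simp only [dotp, Pi.sub_apply, mul_sub, Finset.sum_sub_distrib] at *
    linarith)
  have := sub_eq_zero.mp h
  exact this
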